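/- Fix a type X with decidable equality, m : ℕ, a finite set U : Finset X, sets S : Fin m → Finset X with S i ⊆ U for every i, and b : X with b ∉ U. Then for every natural number k, the following are equivalent: (1) there exists J ⊆ Fin m with J.card ≤ k and ⋃_{i ∈ J} S i = U; (2) there exists a membership decision tree T with at most k internal nodes such that eval T e = in for every e ∈ U and eval T b = out. -/

import Mathlib

/-- A decision tree: either a leaf with a label, or an internal node with a predicate,
a false-subtree and a true-subtree. -/
inductive DTree (X Y : Type*) where
  | leaf (y : Y) : DTree X Y
  | node (p : X → Bool) (f t : DTree X Y) : DTree X Y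

namespace DTree

variable {X Y : Type*}

/-- Evaluation of a decision tree on an input. -/
def eval : DTree X Y → X → Y
  | leaf y, _ => y
  | node p f t, x => if p x then t.eval x else f.eval x

/-- Size of a decision tree: the number of internal nodes. -/
def size : DTree X Y → ℕ
  | leaf _ => 0
  | node _ f t => f.size + t.size + 1

end DTree

/-- The two-element type of labels `{in, out}`. -/
inductive Lab where
  | inn : Lab
  | out : Lab
deriving DecidableEq

/-- A membership decision tree: every internal-node predicate is
`fun x => decide (x ∈ S i)` for some `i : Fin m`. -/
def IsMemTree {X : Type*} [DecidableEq X] {m : ℕ} (S : Fin m → Finset X) :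
    DTree X Lab → Prop
  | DTree.leaf _ => True
  | DTree.node p f t =>
      (∃ i : Fin m, p = fun x => decide (x ∈ S i)) ∧ IsMemTree S f ∧ IsMemTree S t


def chainTree {X : Type*} [DecidableEq X] {m : ℕ} (S : Fin m → Finset X) :
    List (Fin m) → DTree X Lab
  | [] => .leaf .out
  | i :: l => .node (fun x => decide (x ∈ S i)) (chainTree S l) (.leaf .inn)

lemma chainTree_isMem {X : Type*} [DecidableEq X] {m : ℕ} (S : Fin m → Finset X) :
    ∀ l : List (Fin m), IsMemTree S (chainTree S l)
  | [] => trivial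
  | i :: l => ⟨⟨i, rfl⟩, chainTree_isMem S l, trivial⟩

lemma chainTree_size {X : Type*} [DecidableEq X] {m : ℕ} (S : Fin m → Finset X) :
    ∀ l : List (Fin m), (chainTree S l).size = l.length
  | [] => rfl
  | i :: l => by simp [chainTree, DTree.size, chainTree_size S l]

lemma chainTree_eval_mem {X : Type*} [DecidableEq X] {m : ℕ} (S : Fin m → Finset X)
    (x : X) : ∀ l : List (Fin m), (∃ i ∈ l, x ∈ S i) →
      (chainTree S l).eval x = Lab.inn
  | [], h => by simp at h
  | i :: l, h => by
    by_cases hx : x ∈ S i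
    · simp [chainTree, DTree.eval, hx]
    · simp [chainTree, DTree.eval, hx]
      apply chainTree_eval_mem S x l
      rcases h with ⟨j, hj, hxj⟩
      rcases List.mem_cons.1 hj with rfl | hj
      · exact absurd hxj hx
      · exact ⟨j, hj, hxj⟩

lemma chainTree_eval_not_mem {X : Type*} [DecidableEq X] {m : ℕ} (S : Fin m → Finset X)
    (x : X) : ∀ l : List (Fin m), (∀ i ∈ l, x ∉ S i) →
      (chainTree S l).eval x = Lab.out
  | [], _ => rfl
  | i :: l, h => by
    have hx : x ∉ S i := h i List.mem_cons_self
    simp only [chainTree, DTree.eval, hx, decide_false, if_false]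
    exact chainTree_eval_not_mem S x l fun j hj => h j (List.mem_cons_of_mem i hj)

lemma memTree_indices {X : Type*} [DecidableEq X] {m : ℕ} (S : Fin m → Finset X) :
    ∀ T : DTree X Lab, IsMemTree S T →
      ∃ J : Finset (Fin m), J.card ≤ T.size ∧
        ∀ x y : X, (∀ i ∈ J, x ∉ S i) → (∀ i ∈ J, y ∉ S i) → T.eval x = T.eval y
  | .leaf _, _ => ⟨∅, by simp [DTree.size], fun _ _ _ _ => rfl⟩
  | .node p f t, ⟨⟨i, hp⟩, hf, _⟩ => by
    obtain ⟨J, hJcard, hJ⟩ := memTree_indices S f hf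
    refine ⟨insert i J, ?_, ?_⟩
    · calc (insert i J).card ≤ J.card + 1 := Finset.card_insert_le _ _
        _ ≤ f.size + t.size + 1 := by omega
    · intro x y hx hy
      have hxi : x ∉ S i := hx i (Finset.mem_insert_self _ _)
      have hyi : y ∉ S i := hy i (Finset.mem_insert_self _ _)
      simp only [DTree.eval, hp, hxi, hyi, decide_false, if_false]
      exact hJ x y (fun j hj => hx j (Finset.mem_insert_of_mem hj))
        (fun j hj => hy j (Finset.mem_insert_of_mem hj))

/-- Correctness of the Set Cover reduction: `U` has a set cover of size at most `k`
iff there is a membership decision tree with at most `k` internal nodes labeling every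
element of `U` with `in` and the outside element `b` with `out`. -/
theorem setCover_iff_memTree
    {X : Type*} [DecidableEq X] (m : ℕ) (U : Finset X) (S : Fin m → Finset X)
    (hS : ∀ i, S i ⊆ U) (b : X) (hb : b ∉ U) (k : ℕ) :
    (∃ J : Finset (Fin m), J.card ≤ k ∧ J.biUnion S = U) ↔
    (∃ T : DTree X Lab, IsMemTree S T ∧ T.size ≤ k ∧
      (∀ e ∈ U, T.eval e = Lab.inn) ∧ T.eval b = Lab.out) := by
  constructor
  · rintro ⟨J, hJk, hJU⟩
    refine ⟨chainTree S J.toList, chainTree_isMem S _, ?_, ?_, ?_⟩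
    · rw [chainTree_size]; simpa using hJk
    · intro e he
      apply chainTree_eval_mem
      rw [← hJU] at he
      rcases Finset.mem_biUnion.1 he with ⟨i, hi, hei⟩
      exact ⟨i, by simpa using hi, hei⟩
    · exact chainTree_eval_not_mem S b _ fun i _ hbi => hb (hS i hbi)
  · rintro ⟨T, hMem, hsize, hU, hbout⟩
    obtain ⟨J, hJcard, hJ⟩ := memTree_indices S T hMem
    refine ⟨J, hJcard.trans hsize, ?_⟩
    apply Finset.Subset.antisymm
    · intro x hx
      rcases Finset.mem_biUnion.1 hx with ⟨i, _, hxi⟩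
      exact hS i hxi
    · intro e he
      by_contra h
      have he' : ∀ i ∈ J, e ∉ S i := by
        intro i hi hei
        exact h (Finset.mem_biUnion.2 ⟨i, hi, hei⟩)
      have hb' : ∀ i ∈ J, b ∉ S i := fun i _ hbi => hb (hS i hbi)
      have := hJ e b he' hb'
      rw [hU e he, hbout] at this
      exact Lab.noConfusion this
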